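/- Assume [L:F_q] is odd, and let φ and ψ be ordinary rank-2 Drinfeld F_q[X]-modules over L whose characteristic polynomials of the Frobenius endomorphism define smooth affine plane curves over F_q. Then φ and ψ are L-isomorphic if and only if they are L-isogenous (there exists an isogeny φ → ψ in L{τ}) and L̄-isomorphic. -/

import Mathlib

open Polynomial Finset

noncomputable section

variable (Fq : Type) [Field Fq] [Fintype Fq]

/-- The Frobenius `x ↦ x^q` as an `Fq`-linear endomorphism of an `Fq`-algebra field `M`
(of the same characteristic, which is automatic since `Fq → M` is injective). -/
def drinTau (M : Type) [Field M] [Algebra Fq M] : Module.End Fq M where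
  toFun x := x ^ Fintype.card Fq
  map_add' x y := by
    obtain ⟨n, hp, hcard⟩ := FiniteField.card Fq (ringChar Fq)
    haveI : Fact (Nat.Prime (ringChar Fq)) := ⟨hp⟩
    haveI : CharP M (ringChar Fq) :=
      charP_of_injective_algebraMap (algebraMap Fq M).injective (ringChar Fq)
    rw [hcard]
    exact add_pow_char_pow x y (ringChar Fq) n
  map_smul' c x := by
    have h1 : c • x = algebraMap Fq M c * x := Algebra.smul_def c x
    have h2 : c • x ^ Fintype.card Fq = algebraMap Fq M c * x ^ Fintype.card Fq :=
      Algebra.smul_def c _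
    simp only [RingHom.id_apply, h1, h2, mul_pow, ← map_pow, FiniteField.pow_card]

variable (K : Type) [Field K] [Algebra Fq K]

/-- Multiplication by an element of the algebraic closure, as an `Fq`-linear endomorphism. -/
def lmul (x : AlgebraicClosure K) : Module.End Fq (AlgebraicClosure K) :=
  LinearMap.mulLeft Fq x

/-- `P` is the Ore polynomial `∑_{i ≤ n} c i τ^i` with coefficients in the algebraic
closure; coefficients above `n` are normalized to be `0`. -/
def OreRepB (P : Module.End Fq (AlgebraicClosure K)) (c : ℕ → AlgebraicClosure K)
    (n : ℕ) : Prop :=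
  P = ∑ i ∈ Finset.range (n + 1), lmul Fq K (c i) * (drinTau Fq (AlgebraicClosure K)) ^ i ∧
    ∀ i, n < i → c i = 0

/-- `P` is the Ore polynomial `∑_{i ≤ n} c i τ^i` with coefficients `c i ∈ K`. -/
def OreRep (P : Module.End Fq (AlgebraicClosure K)) (c : ℕ → K) (n : ℕ) : Prop :=
  OreRepB Fq K P (fun i => algebraMap K (AlgebraicClosure K) (c i)) n

/-- Membership in `K{τ}`: `P` is an Ore polynomial with coefficients in `K`. -/
def InOre (P : Module.End Fq (AlgebraicClosure K)) : Prop :=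
  ∃ n c, OreRep Fq K P c n

/-- Membership in `K̄{τ}`. -/
def InOreB (P : Module.End Fq (AlgebraicClosure K)) : Prop :=
  ∃ n c, OreRepB Fq K P c n

/-- `P` has `τ`-degree `n` (with coefficients in `K`). -/
def HasDeg (P : Module.End Fq (AlgebraicClosure K)) (n : ℕ) : Prop :=
  ∃ c, OreRep Fq K P c n ∧ c n ≠ 0

/-- `P` is monic of `τ`-degree `n`. -/
def MonicDeg (P : Module.End Fq (AlgebraicClosure K)) (n : ℕ) : Prop :=
  ∃ c, OreRep Fq K P c n ∧ c n = 1

def IsMonic (P : Module.End Fq (AlgebraicClosure K)) : Prop :=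
  ∃ n, MonicDeg Fq K P n

/-- `P` is separable: its coefficient of `τ^0` is nonzero. -/
def IsSep (P : Module.End Fq (AlgebraicClosure K)) : Prop :=
  ∃ n c, OreRep Fq K P c n ∧ c 0 ≠ 0

/-- `g` belongs to the left ideal of `K{τ}` generated by the set `S`. -/
def InLeftIdeal (S : Set (Module.End Fq (AlgebraicClosure K)))
    (g : Module.End Fq (AlgebraicClosure K)) : Prop :=
  ∃ (k : ℕ) (w u : Fin k → Module.End Fq (AlgebraicClosure K)),
    (∀ i, InOre Fq K (w i)) ∧ (∀ i, u i ∈ S) ∧ g = ∑ i, w i * u i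

/-- `g = rgcd(S)`: `g` is the monic generator of the left ideal of `K{τ}`
generated by `S`. -/
def IsRgcd (S : Set (Module.End Fq (AlgebraicClosure K)))
    (g : Module.End Fq (AlgebraicClosure K)) : Prop :=
  IsMonic Fq K g ∧ InLeftIdeal Fq K S g ∧ ∀ s ∈ S, ∃ w, InOre Fq K w ∧ s = w * g


/-- `φX` determines a rank-`r` Drinfeld `Fq[X]`-module over `K`:
`deg_τ(φX) = r` and the coefficient of `τ^0` of `φX` is `γ(X)`. -/
def IsDrinfeldFqX (γ : Polynomial Fq →ₐ[Fq] K) (r : ℕ)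
    (φX : Module.End Fq (AlgebraicClosure K)) : Prop :=
  ∃ c : ℕ → K, OreRep Fq K φX c r ∧ c r ≠ 0 ∧ c 0 = γ X

/-- The set `Hom(ψ, φ)` of morphisms between the Drinfeld modules determined by
`ψX` and `φX` : Ore polynomials `u ∈ K{τ}` with `u·ψX = φX·u`. -/
def HomSet (ψX φX : Module.End Fq (AlgebraicClosure K)) :
    Set (Module.End Fq (AlgebraicClosure K)) :=
  {u | InOre Fq K u ∧ u * ψX = φX * u}

/-- `τ_L := τ^{[L:Fq]}`, the Frobenius endomorphism of Drinfeld modules over `L`. -/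
def tauL (L : Type) [Field L] [Algebra Fq L] : Module.End Fq (AlgebraicClosure L) :=
  (drinTau Fq (AlgebraicClosure L)) ^ (Module.finrank Fq L)

/-- `Y² + h(X)·Y − f(X)` is the characteristic polynomial of the Frobenius endomorphism
of the rank-2 Drinfeld module determined by `φX`:
`τ_L² + φ_h·τ_L − φ_f = 0`, `deg f = [L:Fq]` and `deg h ≤ [L:Fq]/2`. -/
def IsCharPolyFrob (L : Type) [Field L] [Algebra Fq L]
    (φX : Module.End Fq (AlgebraicClosure L)) (h f : Polynomial Fq) : Prop :=
  tauL Fq L ^ 2 + Polynomial.aeval φX h * tauL Fq L - Polynomial.aeval φX f = 0 ∧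
    f.natDegree = Module.finrank Fq L ∧ h.natDegree ≤ Module.finrank Fq L / 2

/-- The plane curve `ξ := Y² + h(X)·Y − f(X)`, as an element of `Fq[X][Y]`
(the outer polynomial variable is `Y`). -/
def xiPoly (h f : Polynomial Fq) : Polynomial (Polynomial Fq) :=
  X ^ 2 + C h * X - C f

/-- `∂ξ/∂X = h'(X)·Y − f'(X)`. -/
def xiPolyDX (h f : Polynomial Fq) : Polynomial (Polynomial Fq) :=
  C (derivative h) * X - C (derivative f)

/-- The affine plane curve `ξ = 0` is smooth over `Fq`: `ξ`, `∂ξ/∂X` and `∂ξ/∂Y`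
generate the unit ideal of `Fq[X,Y]`. -/
def XiSmooth (h f : Polynomial Fq) : Prop :=
  Ideal.span {xiPoly Fq h f, xiPolyDX Fq h f, derivative (xiPoly Fq h f)} = ⊤

/-- The coordinate ring `A_H := Fq[X][Y]/(ξ)`. -/
abbrev AH (h f : Polynomial Fq) : Type :=
  Polynomial (Polynomial Fq) ⧸ Ideal.span {xiPoly Fq h f}

/-- The class `X̄` of `X` in `A_H`. -/
def XH (h f : Polynomial Fq) : AH Fq h f :=
  Ideal.Quotient.mk _ (C X)

/-- The class `Ȳ` of `Y` in `A_H`. -/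
def YH (h f : Polynomial Fq) : AH Fq h f :=
  Ideal.Quotient.mk _ X

/-! ### Auxiliary lemmas for statement2 -/

section Aux

variable {Fq K}

lemma aux_drinTau_apply {M : Type} [Field M] [Algebra Fq M] (x : M) :
    drinTau Fq M x = x ^ Fintype.card Fq := rfl

lemma aux_drinTau_pow_apply {M : Type} [Field M] [Algebra Fq M] (i : ℕ) (x : M) :
    ((drinTau Fq M) ^ i) x = x ^ (Fintype.card Fq ^ i) := by
  induction i generalizing x with
  | zero => simp
  | succ n ih =>
    rw [pow_succ, Module.End.mul_apply, aux_drinTau_apply, ih, ← pow_mul]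
    ring_nf

lemma aux_lmul_apply (x y : AlgebraicClosure K) : lmul Fq K x y = x * y := rfl

/-- `P` is represented by the polynomial `p` as a map. -/
def PRep (P : Module.End Fq (AlgebraicClosure K)) (p : Polynomial (AlgebraicClosure K)) : Prop :=
  ∀ x, P x = p.eval x

lemma PRep.unique {P : Module.End Fq (AlgebraicClosure K)} {p r : Polynomial (AlgebraicClosure K)}
    (h1 : PRep P p) (h2 : PRep P r) : p = r :=
  Polynomial.funext fun x => by rw [← h1 x, ← h2 x]

lemma aux_oreRepB_prep {P : Module.End Fq (AlgebraicClosure K)} {c : ℕ → AlgebraicClosure K}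
    {n : ℕ} (h : OreRepB Fq K P c n) :
    PRep P (∑ i ∈ Finset.range (n+1), C (c i) * X ^ (Fintype.card Fq ^ i)) := by
  intro x
  rw [h.1, LinearMap.sum_apply, eval_finset_sum]
  refine Finset.sum_congr rfl fun i _ => ?_
  rw [Module.End.mul_apply, aux_drinTau_pow_apply, aux_lmul_apply, eval_mul, eval_C, eval_pow,
    eval_X]

lemma aux_inOre_prep {P : Module.End Fq (AlgebraicClosure K)} (h : InOre Fq K P) :
    ∃ p : Polynomial (AlgebraicClosure K), PRep P p ∧ p.coeff 0 = 0 := by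
  obtain ⟨n, c, hc⟩ := h
  refine ⟨_, aux_oreRepB_prep hc, ?_⟩
  rw [finset_sum_coeff]
  refine Finset.sum_eq_zero fun i _ => ?_
  rw [coeff_C_mul, coeff_X_pow, if_neg, mul_zero]
  exact (Nat.pos_of_ne_zero (pow_ne_zero i (Fintype.card_ne_zero (α := Fq)))).ne

lemma aux_eval_surj {p : Polynomial (AlgebraicClosure K)} (hp : p.natDegree ≠ 0) :
    Function.Surjective fun x => p.eval x := by
  intro y
  have hd : (0 : WithBot ℕ) < p.degree := natDegree_pos_iff_degree_pos.mp (Nat.pos_of_ne_zero hp)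
  obtain ⟨x, hx⟩ := IsAlgClosed.exists_root (p - C y) (by rw [degree_sub_C hd]; exact hd.ne')
  refine ⟨x, ?_⟩
  have := hx
  rw [IsRoot, eval_sub, eval_C, sub_eq_zero] at this
  exact this

end Aux

section Aux2

set_option linter.unusedSectionVars false

variable {Fq} {L : Type} [Field L] [Algebra Fq L]

lemma aux_one_lt_q : 1 < Fintype.card Fq := Fintype.one_lt_card

lemma aux_tauL_apply [FiniteDimensional Fq L] (x : AlgebraicClosure L) :
    tauL Fq L x = x ^ (Fintype.card Fq ^ Module.finrank Fq L) :=
  aux_drinTau_pow_apply _ _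

lemma aux_pow_card_fix [FiniteDimensional Fq L] (l : L) :
    (algebraMap L (AlgebraicClosure L) l) ^ (Fintype.card Fq ^ Module.finrank Fq L)
      = algebraMap L (AlgebraicClosure L) l := by
  have : Finite L := Module.finite_of_finite Fq
  cases nonempty_fintype L
  rw [← map_pow, ← Module.card_eq_pow_finrank (K := Fq) (V := L), FiniteField.pow_card]

lemma aux_tauL_comm [FiniteDimensional Fq L] {ι : Module.End Fq (AlgebraicClosure L)}
    (h : InOre Fq L ι) : ι * tauL Fq L = tauL Fq L * ι := by
  obtain ⟨n, c, hrep, -⟩ := h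
  ext x
  rw [Module.End.mul_apply, Module.End.mul_apply, hrep, LinearMap.sum_apply, LinearMap.sum_apply,
    map_sum]
  refine Finset.sum_congr rfl fun i _ => ?_
  rw [Module.End.mul_apply, Module.End.mul_apply, aux_lmul_apply, aux_lmul_apply,
    aux_drinTau_pow_apply, aux_drinTau_pow_apply, aux_tauL_apply, aux_tauL_apply, mul_pow,
    aux_pow_card_fix, ← pow_mul, ← pow_mul, mul_comm (Fintype.card Fq ^ i)]

lemma aux_intertwine {φX ψX E : Module.End Fq (AlgebraicClosure L)}
    (hE : E * φX = ψX * E) (g : Polynomial Fq) :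
    E * Polynomial.aeval φX g = Polynomial.aeval ψX g * E := by
  induction g using Polynomial.induction_on with
  | C a => rw [aeval_C, aeval_C]; exact (Algebra.commutes a E).symm
  | add p q hp hq => rw [map_add, map_add, mul_add, add_mul, hp, hq]
  | monomial n a ih =>
    have e : (C a * X ^ (n + 1) : Polynomial Fq) = C a * X ^ n * X := by ring
    have l1 : Polynomial.aeval φX (C a * X ^ n * X) = Polynomial.aeval φX (C a * X ^ n) * φX := by
      rw [map_mul, aeval_X]
    have l2 : Polynomial.aeval ψX (C a * X ^ n * X) = Polynomial.aeval ψX (C a * X ^ n) * ψX := by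
      rw [map_mul, aeval_X]
    rw [e, l1, l2, ← mul_assoc, ih, mul_assoc, hE, ← mul_assoc]

end Aux2

section Aux3

set_option linter.unusedSectionVars false
set_option maxHeartbeats 1000000

variable {Fq} {L : Type} [Field L] [Algebra Fq L]

lemma aux_comp_C_mul_X_coeff (p : Polynomial (AlgebraicClosure L)) (c : AlgebraicClosure L)
    (n : ℕ) : (p.comp (C c * X)).coeff n = c ^ n * p.coeff n := by
  induction p using Polynomial.induction_on' with
  | add p q hp hq => simp [add_comp, hp, hq, mul_add]
  | monomial k a =>
    rw [monomial_comp, mul_pow, ← C_pow, ← mul_assoc, mul_comm (C a) (C (c^k)), mul_assoc,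
      coeff_C_mul, coeff_C_mul, coeff_monomial, coeff_X_pow]
    by_cases h : n = k
    · subst h; simp
    · simp [h, Ne.symm h]

lemma aux_coeff_one_comp (p : Polynomial (AlgebraicClosure L)) {r : Polynomial (AlgebraicClosure L)}
    (hr : r.coeff 0 = 0) : (p.comp r).coeff 1 = p.coeff 1 * r.coeff 1 := by
  induction p using Polynomial.induction_on' with
  | add p q hp hq => simp [add_comp, hp, hq, add_mul]
  | monomial k a =>
    rw [monomial_comp, coeff_C_mul, coeff_monomial]
    match k with
    | 0 => simp [coeff_one]
    | 1 => simp
    | (j+2) =>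
      obtain ⟨r', rfl⟩ := X_dvd_iff.mpr hr
      rw [mul_pow, mul_comm (X ^ (j+2)) (r' ^ (j+2)), coeff_mul_X_pow']
      simp

lemma aux_rank2_prep {χ : Module.End Fq (AlgebraicClosure L)} {c : ℕ → L}
    (hrep : OreRep Fq L χ c 2) :
    PRep χ (C (algebraMap L (AlgebraicClosure L) (c 0)) * X
      + C (algebraMap L (AlgebraicClosure L) (c 1)) * X ^ Fintype.card Fq
      + C (algebraMap L (AlgebraicClosure L) (c 2)) * X ^ Fintype.card Fq ^ 2) := by
  have h := aux_oreRepB_prep hrep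
  intro x
  rw [h x]
  simp [Finset.sum_range_succ]

lemma aux_rank2_coeff_zero (c : ℕ → L) :
    (C (algebraMap L (AlgebraicClosure L) (c 0)) * X
      + C (algebraMap L (AlgebraicClosure L) (c 1)) * X ^ Fintype.card Fq
      + C (algebraMap L (AlgebraicClosure L) (c 2)) * X ^ Fintype.card Fq ^ 2).coeff 0 = 0 := by
  have hq : 1 < Fintype.card Fq := aux_one_lt_q
  have hq2 : 1 < Fintype.card Fq ^ 2 := Nat.one_lt_pow (by norm_num) hq
  rw [coeff_add, coeff_add, coeff_C_mul, coeff_C_mul, coeff_C_mul, coeff_X_zero, coeff_X_pow,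
    coeff_X_pow, if_neg (by omega), if_neg (by omega)]
  simp

lemma aux_rank2_coeff_one (c : ℕ → L) :
    (C (algebraMap L (AlgebraicClosure L) (c 0)) * X
      + C (algebraMap L (AlgebraicClosure L) (c 1)) * X ^ Fintype.card Fq
      + C (algebraMap L (AlgebraicClosure L) (c 2)) * X ^ Fintype.card Fq ^ 2).coeff 1
      = algebraMap L (AlgebraicClosure L) (c 0) := by
  have hq : 1 < Fintype.card Fq := aux_one_lt_q
  have hq2 : 1 < Fintype.card Fq ^ 2 := Nat.one_lt_pow (by norm_num) hq
  rw [coeff_add, coeff_add, coeff_C_mul, coeff_C_mul, coeff_C_mul, coeff_X_one, coeff_X_pow,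
    coeff_X_pow, if_neg (by omega), if_neg (by omega)]
  simp

lemma aux_rank2_coeff_top (c : ℕ → L) :
    (C (algebraMap L (AlgebraicClosure L) (c 0)) * X
      + C (algebraMap L (AlgebraicClosure L) (c 1)) * X ^ Fintype.card Fq
      + C (algebraMap L (AlgebraicClosure L) (c 2)) * X ^ Fintype.card Fq ^ 2).coeff
        (Fintype.card Fq ^ 2) = algebraMap L (AlgebraicClosure L) (c 2) := by
  have hq : 1 < Fintype.card Fq := aux_one_lt_q
  have hq2 : Fintype.card Fq < Fintype.card Fq ^ 2 := by
    have := Nat.pow_lt_pow_right hq (show 1 < 2 by norm_num)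
    simpa using this
  rw [coeff_add, coeff_add, coeff_C_mul, coeff_C_mul, coeff_C_mul, coeff_X, coeff_X_pow,
    coeff_X_pow, if_neg (by omega), if_neg (by omega)]
  simp

lemma aux_rank2_natDegree {c : ℕ → L} (h2 : c 2 ≠ 0) :
    (C (algebraMap L (AlgebraicClosure L) (c 0)) * X
      + C (algebraMap L (AlgebraicClosure L) (c 1)) * X ^ Fintype.card Fq
      + C (algebraMap L (AlgebraicClosure L) (c 2)) * X ^ Fintype.card Fq ^ 2).natDegree
      = Fintype.card Fq ^ 2 := by
  have hq : 1 < Fintype.card Fq := aux_one_lt_q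
  have hq2 : Fintype.card Fq ≤ Fintype.card Fq ^ 2 := Nat.le_self_pow (by norm_num) _
  have h2' : algebraMap L (AlgebraicClosure L) (c 2) ≠ 0 :=
    (map_ne_zero_iff _ (algebraMap L (AlgebraicClosure L)).injective).mpr h2
  refine le_antisymm ?_ ?_
  · refine natDegree_add_le_of_degree_le (natDegree_add_le_of_degree_le ?_ ?_) ?_
    · refine le_trans (natDegree_C_mul_le _ _) ?_
      have : 1 ≤ Fintype.card Fq ^ 2 := Nat.one_le_pow _ _ (by omega)
      simpa using this
    · exact le_trans (natDegree_C_mul_le _ _) (by simp [natDegree_X_pow, hq2])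
    · exact le_trans (natDegree_C_mul_le _ _) (by simp)
  · refine le_natDegree_of_ne_zero ?_
    rw [aux_rank2_coeff_top]
    exact h2'

end Aux3

section Aux4

set_option linter.unusedSectionVars false
set_option maxHeartbeats 1000000

variable {Fq} {L : Type} [Field L] [Algebra Fq L]

lemma aux_aeval_rep (γ : Polynomial Fq →ₐ[Fq] L) {χ : Module.End Fq (AlgebraicClosure L)}
    {c : ℕ → L} (hrep : OreRep Fq L χ c 2) (h0 : c 0 = γ X) (h2 : c 2 ≠ 0) (g : Polynomial Fq) :
    ∃ p : Polynomial (AlgebraicClosure L),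
      PRep (Polynomial.aeval χ g) p ∧ p.coeff 0 = 0 ∧
      p.coeff 1 = algebraMap L (AlgebraicClosure L) (γ g) ∧
      (g ≠ 0 → p ≠ 0 ∧ p.natDegree = Fintype.card Fq ^ (2 * g.natDegree)) := by
  have hq : 1 < Fintype.card Fq := aux_one_lt_q
  suffices H : ∀ (n : ℕ) (g : Polynomial Fq), g.natDegree ≤ n →
      ∃ p : Polynomial (AlgebraicClosure L),
      PRep (Polynomial.aeval χ g) p ∧ p.coeff 0 = 0 ∧
      p.coeff 1 = algebraMap L (AlgebraicClosure L) (γ g) ∧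
      (g ≠ 0 → p ≠ 0 ∧ p.natDegree = Fintype.card Fq ^ (2 * g.natDegree)) by
    exact H g.natDegree g le_rfl
  intro n
  induction n with
  | zero =>
    intro g hg
    obtain ⟨a, ha⟩ := natDegree_eq_zero.mp (Nat.le_zero.mp hg)
    subst ha
    have key : algebraMap L (AlgebraicClosure L) (γ (C a)) = algebraMap Fq (AlgebraicClosure L) a := by
      rw [← Polynomial.algebraMap_eq, AlgHom.commutes, ← IsScalarTower.algebraMap_apply]
    refine ⟨C (algebraMap Fq (AlgebraicClosure L) a) * X, ?_, by simp, by simp [key], ?_⟩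
    · intro x
      rw [aeval_C, Module.algebraMap_end_apply, Algebra.smul_def, eval_mul, eval_C, eval_X]
    · intro hg0
      have ha0 : a ≠ 0 := fun h => hg0 (by simp [h])
      have hb : algebraMap Fq (AlgebraicClosure L) a ≠ 0 :=
        (map_ne_zero_iff _ (algebraMap Fq (AlgebraicClosure L)).injective).mpr ha0
      constructor
      · exact mul_ne_zero (C_ne_zero.mpr hb) X_ne_zero
      · rw [natDegree_C_mul_X _ hb, natDegree_C, mul_zero, pow_zero]
  | succ n ih =>
    intro g hg
    by_cases hgn : g.natDegree ≤ n
    · exact ih g hgn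
    have hdg : g.natDegree = n + 1 := le_antisymm hg (by omega)
    have hg0 : g ≠ 0 := fun h => by simp [h] at hdg
    set g₁ := g.divX with hg₁def
    have hdg₁ : g₁.natDegree = n := by
      rw [hg₁def, natDegree_divX_eq_natDegree_tsub_one, hdg]
      omega
    have hg₁0 : g₁ ≠ 0 := by
      intro h
      have := divX_eq_zero_iff.mp h
      rw [this] at hdg
      simp at hdg
    obtain ⟨p₁, hp₁rep, hp₁0, hp₁1, hp₁d⟩ := ih g₁ (le_of_eq hdg₁)
    obtain ⟨hp₁ne, hp₁deg⟩ := hp₁d hg₁0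
    set q := Fintype.card Fq with hqdef
    set am := algebraMap L (AlgebraicClosure L) with hamdef
    set pχ : Polynomial (AlgebraicClosure L) :=
      C (am (c 0)) * X + C (am (c 1)) * X ^ q + C (am (c 2)) * X ^ q ^ 2 with hpχdef
    have hχrep : PRep χ pχ := aux_rank2_prep hrep
    have hpχ0 : pχ.coeff 0 = 0 := aux_rank2_coeff_zero c
    have hpχ1 : pχ.coeff 1 = am (c 0) := aux_rank2_coeff_one c
    have hpχd : pχ.natDegree = q ^ 2 := aux_rank2_natDegree h2
    have hgsplit : g = g₁ * X + C (g.coeff 0) := (divX_mul_X_add g).symm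
    have haev : Polynomial.aeval χ g
        = Polynomial.aeval χ g₁ * χ + algebraMap Fq (Module.End Fq (AlgebraicClosure L)) (g.coeff 0) := by
      conv_lhs => rw [hgsplit]
      rw [map_add, map_mul, aeval_X, aeval_C]
    refine ⟨p₁.comp pχ + C (algebraMap Fq (AlgebraicClosure L) (g.coeff 0)) * X, ?_, ?_, ?_, ?_⟩
    · intro x
      rw [haev, LinearMap.add_apply, Module.End.mul_apply, hp₁rep, hχrep,
        Module.algebraMap_end_apply, Algebra.smul_def]
      simp [eval_comp]
    · have epχ : pχ.eval 0 = 0 := by rw [← coeff_zero_eq_eval_zero]; exact hpχ0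
      have e1 : (p₁.comp pχ).coeff 0 = 0 := by
        rw [coeff_zero_eq_eval_zero, eval_comp, epχ, ← coeff_zero_eq_eval_zero]
        exact hp₁0
      simp [e1]
    · have key : algebraMap L (AlgebraicClosure L) (γ (C (g.coeff 0)))
          = algebraMap Fq (AlgebraicClosure L) (g.coeff 0) := by
        rw [← Polynomial.algebraMap_eq, AlgHom.commutes, ← IsScalarTower.algebraMap_apply]
      rw [coeff_add, aux_coeff_one_comp p₁ hpχ0, hp₁1, hpχ1, h0]
      have : (C (algebraMap Fq (AlgebraicClosure L) (g.coeff 0)) * X).coeff 1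
          = algebraMap Fq (AlgebraicClosure L) (g.coeff 0) := by simp
      rw [this, ← key, ← map_mul, ← map_add, ← map_mul, ← map_add]
      congr 1
      conv_rhs => rw [hgsplit]
    · intro _
      have hcompdeg : (p₁.comp pχ).natDegree = q ^ (2 * g.natDegree) := by
        rw [natDegree_comp, hp₁deg, hpχd, ← pow_add, hdg₁, hdg]
        ring_nf
      have hlc : (p₁.comp pχ).leadingCoeff ≠ 0 := by
        rw [leadingCoeff_comp (by rw [hpχd]; positivity)]
        refine mul_ne_zero (leadingCoeff_ne_zero.mpr hp₁ne) (pow_ne_zero _ ?_)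
        have htop : pχ.coeff (q ^ 2) = am (c 2) := aux_rank2_coeff_top c
        rw [leadingCoeff, hpχd, htop]
        exact (map_ne_zero_iff _ (algebraMap L (AlgebraicClosure L)).injective).mpr h2
      have hcompne : p₁.comp pχ ≠ 0 := leadingCoeff_ne_zero.mp hlc
      have hsmall : (C (algebraMap Fq (AlgebraicClosure L) (g.coeff 0)) * X).natDegree
          < (p₁.comp pχ).natDegree := by
        refine lt_of_le_of_lt (le_trans (natDegree_C_mul_le _ _) natDegree_X_le) ?_
        rw [hcompdeg]
        have : 1 < q ^ (2 * g.natDegree) := Nat.one_lt_pow (by omega) hq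
        omega
      have hdeg : (p₁.comp pχ + C (algebraMap Fq (AlgebraicClosure L) (g.coeff 0)) * X).natDegree
          = q ^ (2 * g.natDegree) := by
        rw [add_comm, natDegree_add_eq_right_of_natDegree_lt hsmall, hcompdeg]
      constructor
      · intro h
        rw [h, natDegree_zero] at hdeg
        have : 1 < q ^ (2 * g.natDegree) := Nat.one_lt_pow (by omega) hq
        omega
      · exact hdeg

end Aux4

/-- Assume `[L:Fq]` odd, and let `φ`, `ψ` be ordinary rank-2 Drinfeld
`Fq[X]`-modules over `L` whose characteristic polynomials of the Frobenius endomorphism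
define smooth affine plane curves. Then `φ` and `ψ` are `L`-isomorphic iff they are
`L`-isogenous and `L̄`-isomorphic. -/
theorem statement2
    (Fq : Type) [Field Fq] [Fintype Fq]
    (L : Type) [Field L] [Algebra Fq L] [FiniteDimensional Fq L]
    (p : Polynomial Fq) (hpm : p.Monic) (hpirr : Irreducible p)
    (γ : Polynomial Fq →ₐ[Fq] L) (hker : RingHom.ker γ = Ideal.span {p})
    (hodd : Odd (Module.finrank Fq L))
    (φX ψX : Module.End Fq (AlgebraicClosure L))
    (hφ : IsDrinfeldFqX Fq L γ 2 φX) (hψ : IsDrinfeldFqX Fq L γ 2 ψX)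
    (hA fA hB fB : Polynomial Fq)
    (hcpφ : IsCharPolyFrob Fq L φX hA fA) (hordφ : ¬ p ∣ hA)
    (hsmoothφ : XiSmooth Fq hA fA)
    (hcpψ : IsCharPolyFrob Fq L ψX hB fB) (hordψ : ¬ p ∣ hB)
    (hsmoothψ : XiSmooth Fq hB fB) :
    (∃ lam : L, lam ≠ 0 ∧
        lmul Fq L (algebraMap L (AlgebraicClosure L) lam) * φX =
          ψX * lmul Fq L (algebraMap L (AlgebraicClosure L) lam)) ↔
      ((∃ ι, ι ≠ 0 ∧ InOre Fq L ι ∧ ι * φX = ψX * ι) ∧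
        ∃ mu : AlgebraicClosure L, mu ≠ 0 ∧
          lmul Fq L mu * φX = ψX * lmul Fq L mu) := by
  have hq : 1 < Fintype.card Fq := aux_one_lt_q
  constructor
  · rintro ⟨lam, hlam0, hlam⟩
    have hmu0 : algebraMap L (AlgebraicClosure L) lam ≠ 0 :=
      (map_ne_zero_iff _ (algebraMap L (AlgebraicClosure L)).injective).mpr hlam0
    refine ⟨⟨lmul Fq L (algebraMap L (AlgebraicClosure L) lam), ?_, ?_, hlam⟩,
      algebraMap L (AlgebraicClosure L) lam, hmu0, hlam⟩
    · intro h
      have h1 : lmul Fq L (algebraMap L (AlgebraicClosure L) lam) 1 = 0 := by rw [h]; rfl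
      rw [aux_lmul_apply, mul_one] at h1
      exact hmu0 h1
    · refine ⟨0, fun i => if i = 0 then lam else 0, ?_, ?_⟩
      · show _ = ∑ i ∈ Finset.range (0 + 1), _
        rw [Finset.range_one, Finset.sum_singleton]
        simp
      · intro i hi
        have hine : i ≠ 0 := by omega
        simp [hine]
  · rintro ⟨⟨ι, hι0, hιOre, hι⟩, mu, hmu0, hmu⟩
    classical
    obtain ⟨a, haRep, ha2, ha0⟩ := hφ
    obtain ⟨b, hbRep, hb2, hb0⟩ := hψ
    set m := Module.finrank Fq L with hmdef
    have hm0 : m ≠ 0 := by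
      intro h
      rw [h] at hodd
      simp [Nat.odd_iff] at hodd
    set N : ℕ := Fintype.card Fq ^ m with hNdef
    have hN1 : 1 < N := Nat.one_lt_pow hm0 hq
    have hN0 : 0 < N := by omega
    -- characteristic polynomial identities
    have hφeq : tauL Fq L ^ 2 + Polynomial.aeval φX hA * tauL Fq L = Polynomial.aeval φX fA :=
      sub_eq_zero.mp hcpφ.1
    have hψeq : tauL Fq L ^ 2 + Polynomial.aeval ψX hB * tauL Fq L = Polynomial.aeval ψX fB :=
      sub_eq_zero.mp hcpψ.1
    have hcomm : ι * tauL Fq L = tauL Fq L * ι := aux_tauL_comm hιOre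
    have hcomm2 : tauL Fq L ^ 2 * ι = ι * tauL Fq L ^ 2 := by
      rw [sq, mul_assoc, ← hcomm, ← mul_assoc, ← hcomm, mul_assoc]
    have hint : ∀ g, ι * Polynomial.aeval φX g = Polynomial.aeval ψX g * ι :=
      fun g => aux_intertwine hι g
    have K1 : ι * Polynomial.aeval φX fA
        = ι * tauL Fq L ^ 2 + ι * Polynomial.aeval φX hA * tauL Fq L := by
      rw [← hφeq, mul_add, ← mul_assoc]
    have K2 : ι * Polynomial.aeval φX fB
        = ι * tauL Fq L ^ 2 + ι * Polynomial.aeval φX hB * tauL Fq L := by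
      rw [hint fB, ← hψeq, add_mul, hcomm2, mul_assoc, ← hcomm, ← mul_assoc, ← hint hB]
    have W0 : ι * (Polynomial.aeval φX (hA - hB) * tauL Fq L
        - Polynomial.aeval φX (fA - fB)) = 0 := by
      have expand0 : ι * (Polynomial.aeval φX (hA - hB) * tauL Fq L
          - Polynomial.aeval φX (fA - fB))
          = (ι * Polynomial.aeval φX hA * tauL Fq L + ι * Polynomial.aeval φX fB)
            - (ι * Polynomial.aeval φX hB * tauL Fq L + ι * Polynomial.aeval φX fA) := by
        rw [map_sub, map_sub]
        simp only [mul_sub, sub_mul, mul_assoc]; abel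
      rw [expand0, K1, K2]
      noncomm_ring
    -- polynomial representations
    obtain ⟨pg, hpgrep, hpg0, -, hpgd⟩ := aux_aeval_rep γ haRep ha0 ha2 (hA - hB)
    obtain ⟨pf, hpfrep, hpf0, -, hpfd⟩ := aux_aeval_rep γ haRep ha0 ha2 (fA - fB)
    set pW : Polynomial (AlgebraicClosure L) := expand (AlgebraicClosure L) N pg - pf with hpWdef
    have hWrep : PRep (Polynomial.aeval φX (hA - hB) * tauL Fq L
        - Polynomial.aeval φX (fA - fB)) pW := by
      intro x
      rw [LinearMap.sub_apply, Module.End.mul_apply, hpgrep, hpfrep, aux_tauL_apply, eval_sub,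
        expand_eval]
    have hpW : pW = 0 := by
      by_contra hne
      have hpW0 : pW.coeff 0 = 0 := by
        rw [coeff_sub, coeff_expand hN0, if_pos (dvd_zero N), Nat.zero_div, hpg0, hpf0, sub_zero]
      have hdW : pW.natDegree ≠ 0 := by
        intro h
        have := eq_C_of_natDegree_eq_zero h
        rw [hpW0, map_zero] at this
        exact hne this
      have hsurj := aux_eval_surj hdW
      apply hι0
      ext z
      obtain ⟨x, hx⟩ := hsurj z
      have hx' : pW.eval x = z := hx
      have : ι z = ι (pW.eval x) := by rw [hx']
      rw [this, ← hWrep x, ← Module.End.mul_apply, W0]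
      rfl
    have hexp : expand (AlgebraicClosure L) N pg = pf := by
      have := sub_eq_zero.mpr (hpWdef ▸ hpW)
      exact sub_eq_zero.mp (hpWdef ▸ hpW)
    -- conclude hA = hB and fA = fB
    have hABfAB : hA = hB ∧ fA = fB := by
      by_cases hgz : hA - hB = 0
      · have hABeq : hA = hB := sub_eq_zero.mp hgz
        have hpgz : pg = 0 := by
          have h1 : PRep (0 : Module.End Fq (AlgebraicClosure L)) pg := by
            rw [hgz] at hpgrep
            rwa [map_zero] at hpgrep
          have h2 : PRep (0 : Module.End Fq (AlgebraicClosure L))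
              (0 : Polynomial (AlgebraicClosure L)) := fun x => by simp
          exact h1.unique h2
        have hpfz : pf = 0 := by
          rw [hpgz, map_zero] at hexp
          exact hexp.symm
        refine ⟨hABeq, ?_⟩
        by_contra hfne
        have hfz : fA - fB ≠ 0 := sub_ne_zero.mpr hfne
        exact (hpfd hfz).1 hpfz
      · exfalso
        obtain ⟨hpgne, hpgdeg⟩ := hpgd hgz
        by_cases hfz : fA - fB = 0
        · have hpfz : pf = 0 := by
            have h1 : PRep (0 : Module.End Fq (AlgebraicClosure L)) pf := by
              rw [hfz] at hpfrep
              rwa [map_zero] at hpfrep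
            have h2 : PRep (0 : Module.End Fq (AlgebraicClosure L))
                (0 : Polynomial (AlgebraicClosure L)) := fun x => by simp
            exact h1.unique h2
          rw [hpfz] at hexp
          exact hpgne ((expand_eq_zero hN0).mp hexp)
        · obtain ⟨hpfne, hpfdeg⟩ := hpfd hfz
          have h1 := natDegree_expand N pg
          rw [hexp, hpfdeg, hpgdeg, hNdef, ← pow_add] at h1
          have h2 := Nat.pow_right_injective hq h1
          obtain ⟨k, hk⟩ := hodd
          omega
    obtain ⟨hABeq, hfABeq⟩ := hABfAB
    -- step 2 : use the L̄-isomorphism mu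
    obtain ⟨ph, hphrep, hph0, hph1, -⟩ := aux_aeval_rep γ haRep ha0 ha2 hA
    obtain ⟨ph', hph'rep, hph'0, hph'1, -⟩ := aux_aeval_rep γ hbRep hb0 hb2 hB
    set r : Polynomial (AlgebraicClosure L) := X ^ (N * N) + expand (AlgebraicClosure L) N ph
      with hrdef
    set r' : Polynomial (AlgebraicClosure L) := X ^ (N * N) + expand (AlgebraicClosure L) N ph'
      with hr'def
    have hrrep : PRep (Polynomial.aeval φX fA) r := by
      intro x
      rw [← hφeq, LinearMap.add_apply, Module.End.mul_apply, sq, Module.End.mul_apply,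
        aux_tauL_apply, aux_tauL_apply, hphrep, eval_add, eval_pow, eval_X, expand_eval,
        ← pow_mul]
    have hr'rep : PRep (Polynomial.aeval ψX fB) r' := by
      intro x
      rw [← hψeq, LinearMap.add_apply, Module.End.mul_apply, sq, Module.End.mul_apply,
        aux_tauL_apply, aux_tauL_apply, hph'rep, eval_add, eval_pow, eval_X, expand_eval,
        ← pow_mul]
    have hconj : ∀ g, lmul Fq L mu * Polynomial.aeval φX g = Polynomial.aeval ψX g * lmul Fq L mu :=
      fun g => aux_intertwine hmu g
    have hrep2 : PRep (Polynomial.aeval ψX fB) (C mu * r.comp (C mu⁻¹ * X)) := by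
      intro y
      have e : (lmul Fq L mu * Polynomial.aeval φX fA) (mu⁻¹ * y)
          = (Polynomial.aeval ψX fA * lmul Fq L mu) (mu⁻¹ * y) := by rw [hconj fA]
      rw [Module.End.mul_apply, Module.End.mul_apply, aux_lmul_apply, aux_lmul_apply,
        mul_inv_cancel_left₀ hmu0, hrrep] at e
      rw [← hfABeq, ← e, eval_mul, eval_C, eval_comp, eval_mul, eval_C, eval_X]
    have hr'eq : r' = C mu * r.comp (C mu⁻¹ * X) := hr'rep.unique hrep2
    -- compare coefficients at N
    have hNN : N < N * N := by nlinarith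
    have hcoeffr : r.coeff N = algebraMap L (AlgebraicClosure L) (γ hA) := by
      rw [hrdef, coeff_add, coeff_X_pow, if_neg (by omega), coeff_expand hN0,
        if_pos dvd_rfl, Nat.div_self hN0, hph1, zero_add]
    have hcoeffr' : r'.coeff N = algebraMap L (AlgebraicClosure L) (γ hB) := by
      rw [hr'def, coeff_add, coeff_X_pow, if_neg (by omega), coeff_expand hN0,
        if_pos dvd_rfl, Nat.div_self hN0, hph'1, zero_add]
    have hcoeffconj : (C mu * r.comp (C mu⁻¹ * X)).coeff N
        = mu * (mu⁻¹ ^ N * r.coeff N) := by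
      rw [coeff_C_mul, aux_comp_C_mul_X_coeff]
    have hγhA : γ hA ≠ 0 := by
      intro h
      apply hordφ
      have : hA ∈ RingHom.ker γ := by
        rw [RingHom.mem_ker]
        exact_mod_cast h
      rw [hker] at this
      exact (Ideal.mem_span_singleton).mp this
    have ht0 : algebraMap L (AlgebraicClosure L) (γ hA) ≠ 0 :=
      (map_ne_zero_iff _ (algebraMap L (AlgebraicClosure L)).injective).mpr hγhA
    have hmufix : mu ^ N = mu := by
      have e1 : algebraMap L (AlgebraicClosure L) (γ hA)
          = mu * mu⁻¹ ^ N * algebraMap L (AlgebraicClosure L) (γ hA) := by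
        calc algebraMap L (AlgebraicClosure L) (γ hA)
            = algebraMap L (AlgebraicClosure L) (γ hB) := by rw [hABeq]
          _ = r'.coeff N := hcoeffr'.symm
          _ = mu * (mu⁻¹ ^ N * r.coeff N) := by rw [hr'eq, hcoeffconj]
          _ = mu * mu⁻¹ ^ N * algebraMap L (AlgebraicClosure L) (γ hA) := by
              rw [hcoeffr]; ring
        
      have e2 : mu * mu⁻¹ ^ N = 1 := by
        have := mul_right_cancel₀ ht0 (e1.symm.trans (one_mul _).symm)
        exact this
      have hmuN0 : mu ^ N ≠ 0 := pow_ne_zero _ hmu0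
      rw [inv_pow, mul_inv_eq_one₀ hmuN0] at e2
      exact e2.symm
    -- mu comes from L
    have : Finite L := Module.finite_of_finite Fq
    cases nonempty_fintype L
    have hcardL : Fintype.card L = N := Module.card_eq_pow_finrank (K := Fq) (V := L)
    set Φ : Polynomial (AlgebraicClosure L) := X ^ N - X with hΦdef
    have hΦne : Φ ≠ 0 := by
      intro h
      have : Φ.coeff N = 0 := by rw [h]; simp
      rw [hΦdef, coeff_sub, coeff_X_pow, if_pos rfl, coeff_X, if_neg (by omega)] at this
      simp at this
    have hΦdeg : Φ.natDegree ≤ N := by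
      refine le_trans (natDegree_sub_le _ _) ?_
      rw [natDegree_X_pow, natDegree_X]
      omega
    have hroot : ∀ z : AlgebraicClosure L, z ^ N = z → z ∈ Φ.roots.toFinset := by
      intro z hz
      rw [Multiset.mem_toFinset, mem_roots hΦne]
      rw [hΦdef]
      simp [IsRoot, hz]
    set S : Finset (AlgebraicClosure L) :=
      Finset.univ.image (algebraMap L (AlgebraicClosure L)) with hSdef
    have hScard : S.card = N := by
      rw [hSdef, Finset.card_image_of_injective _ (algebraMap L (AlgebraicClosure L)).injective,
        Finset.card_univ, hcardL]
    have hmuS : mu ∈ S := by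
      by_contra hmuS
      have hTsub : insert mu S ⊆ Φ.roots.toFinset := by
        intro z hz
        rcases Finset.mem_insert.mp hz with h | h
        · exact hroot z (h ▸ hmufix)
        · obtain ⟨l, -, rfl⟩ := Finset.mem_image.mp h
          exact hroot _ (aux_pow_card_fix l)
      have hTcard : (insert mu S).card = N + 1 := by
        rw [Finset.card_insert_of_notMem hmuS, hScard]
      have hle : (insert mu S).card ≤ Φ.natDegree := by
        refine le_trans (Finset.card_le_card hTsub) ?_
        refine le_trans (Multiset.toFinset_card_le _) ?_
        exact_mod_cast Φ.card_roots'
      omega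
    obtain ⟨lam, -, hlam⟩ := Finset.mem_image.mp hmuS
    refine ⟨lam, ?_, ?_⟩
    · intro h
      rw [h, map_zero] at hlam
      exact hmu0 hlam.symm
    · rw [hlam]
      exact hmu


end
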